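/- Let h be a proper lsc sublinear function on ℝⁿ with h = σ_D, the support function of a closed convex set D. If D is polyhedral (h piecewise linear), then for every x ∈ (D^∞)* with F_{D,x} ≠ ∅, the excess e(F_{D,x}, F_{D^∞,x}) := sup_{v ∈ F_{D,x}} dist(v, F_{D^∞,x}) is finite, where F_{D,x} = argmax_{v ∈ D}⟨v, x⟩ and F_{D^∞,x} = argmax_{v ∈ D^∞}⟨v, x⟩. -/

import Mathlib

open Filter Metric Set
open scoped Topology RealInnerProductSpace

noncomputable section

abbrev Eu (n : ℕ) := EuclideanSpace ℝ (Fin n)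

section GeneralDefs

variable {E F : Type*} [NormedAddCommGroup E] [NormedSpace ℝ E]
  [NormedAddCommGroup F] [NormedSpace ℝ F]

/-- `v` is a proximal normal vector to `A` at `a`: for some `t > 0`,
`a` is a nearest point of `A` to `a + t • v`. -/
def proxNormal (A : Set E) (a : E) : Set E :=
  {v | ∃ t : ℝ, 0 < t ∧ ‖t • v‖ = Metric.infDist (a + t • v) A}

/-- the set of nearest points of `K` to `x` (metric projection). -/
def projSet (K : Set E) (x : E) : Set E :=
  {y | y ∈ K ∧ ∀ z ∈ K, ‖x - y‖ ≤ ‖x - z‖}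

/-- the contingent (tangent) cone to `X` at `x`. -/
def tangCone (X : Set E) (x : E) : Set E :=
  {w | ∃ (t : ℕ → ℝ) (v : ℕ → E), (∀ k, 0 < t k) ∧ Tendsto t atTop (𝓝 0) ∧
    Tendsto v atTop (𝓝 w) ∧ ∀ k, x + t k • v k ∈ X}

/-- `A` is locally closed at `a`. -/
def LocallyClosedAt (A : Set E) (a : E) : Prop := ∃ U ∈ 𝓝 a, IsClosed (A ∩ U)

/-- the graph of the restriction `S|_X`. -/
def svGraph (S : E → Set F) (X : Set E) : Set (E × F) := {p | p.1 ∈ X ∧ p.2 ∈ S p.1}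

/-- the Lipschitz-like property of `S` relative to `X` at `x₀` for `u₀` with constant `κ`. -/
def LipschitzLikeRel (S : E → Set F) (X : Set E) (x₀ : E) (u₀ : F) (κ : ℝ) : Prop :=
  LocallyClosedAt (svGraph S univ) (x₀, u₀) ∧
  ∃ V ∈ 𝓝 x₀, ∃ W ∈ 𝓝 u₀, ∀ x ∈ X ∩ V, ∀ x' ∈ X ∩ V, ∀ u ∈ S x' ∩ W,
    ∃ u'' ∈ S x, ‖u - u''‖ ≤ κ * ‖x' - x‖

/-- the graphical modulus of `S` relative to `X` at `x₀` for `u₀` (as an extended real,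
the infimum of all Lipschitz-like constants). -/
def gmod (S : E → Set F) (X : Set E) (x₀ : E) (u₀ : F) : EReal :=
  sInf {c : EReal | ∃ κ : ℝ, 0 ≤ κ ∧ c = (κ : EReal) ∧
    ∃ V ∈ 𝓝 x₀, ∃ W ∈ 𝓝 u₀, ∀ x ∈ X ∩ V, ∀ x' ∈ X ∩ V, ∀ u ∈ S x' ∩ W,
      ∃ u'' ∈ S x, ‖u - u''‖ ≤ κ * ‖x' - x‖}

/-- the horizon cone of `A`. -/
def horizonCone (A : Set E) : Set E :=
  {w | ∃ (a : ℕ → E) (l : ℕ → ℝ), (∀ k, a k ∈ A) ∧ (∀ k, 0 < l k) ∧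
    Tendsto l atTop (𝓝 0) ∧ Tendsto (fun k => l k • a k) atTop (𝓝 w)}

/-- extended-real absolute difference `|a - b|`. -/
def eabsdiff (a b : EReal) : EReal := max (a - b) (b - a)

/-- `f` is locally Lipschitz continuous at `x₀` relative to `X`. -/
def RelLipschitzAt (f : E → EReal) (X : Set E) (x₀ : E) : Prop :=
  ∃ κ : ℝ, 0 ≤ κ ∧ ∃ V ∈ 𝓝 x₀, ∀ x ∈ X ∩ V, ∀ y ∈ X ∩ V,
    eabsdiff (f x) (f y) ≤ ((κ * ‖x - y‖ : ℝ) : EReal)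

/-- the Lipschitz modulus of `f` at `x₀` relative to `X` (as an extended real). -/
def relLipMod (f : E → EReal) (X : Set E) (x₀ : E) : EReal :=
  sInf {c : EReal | ∃ κ : ℝ, 0 ≤ κ ∧ c = (κ : EReal) ∧ ∃ V ∈ 𝓝 x₀,
    ∀ x ∈ X ∩ V, ∀ y ∈ X ∩ V, eabsdiff (f x) (f y) ≤ ((κ * ‖x - y‖ : ℝ) : EReal)}

end GeneralDefs

section InnerDefs

variable {E F : Type*} [NormedAddCommGroup E] [InnerProductSpace ℝ E]
  [NormedAddCommGroup F] [InnerProductSpace ℝ F]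

/-- the regular (Fréchet) normal cone to `A ⊆ E × F` at `a`. -/
def regNormalP (A : Set (E × F)) (a : E × F) : Set (E × F) :=
  {v | ∀ ε : ℝ, 0 < ε → ∃ δ > 0, ∀ b ∈ A, ‖b - a‖ ≤ δ →
    ⟪v.1, b.1 - a.1⟫ + ⟪v.2, b.2 - a.2⟫ ≤ ε * ‖b - a‖}

/-- the limiting (Mordukhovich) normal cone to `A ⊆ E × F` at `a`. -/
def limNormalP (A : Set (E × F)) (a : E × F) : Set (E × F) :=
  {v | ∃ (b : ℕ → E × F) (w : ℕ → E × F), (∀ k, b k ∈ A) ∧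
    (∀ k, w k ∈ regNormalP A (b k)) ∧ Tendsto b atTop (𝓝 a) ∧ Tendsto w atTop (𝓝 v)}

/-- the limiting coderivative of `S` at `x` for `u`:
`xs ∈ coderiv S x u us ↔ (xs, -us) ∈ N_{graph S}(x, u)`. -/
def coderiv (S : E → Set F) (x : E) (u : F) (us : F) : Set E :=
  {xs | (xs, -us) ∈ limNormalP (svGraph S univ) (x, u)}

/-- the projectional coderivative of `S` at `x₀` for `u₀` with respect to `X`. -/
def projCoderiv (S : E → Set F) (X : Set E) (x₀ : E) (u₀ : F) (us : F) : Set E :=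
  {xs | ∃ (x : ℕ → E) (u : ℕ → F) (xv : ℕ → E) (uv : ℕ → F) (y : ℕ → E),
    (∀ k, (x k, u k) ∈ svGraph S X) ∧
    (∀ k, (xv k, -(uv k)) ∈ limNormalP (svGraph S X) (x k, u k)) ∧
    (∀ k, y k ∈ projSet (tangCone X (x k)) (xv k)) ∧
    Tendsto x atTop (𝓝 x₀) ∧ Tendsto u atTop (𝓝 u₀) ∧
    Tendsto uv atTop (𝓝 us) ∧ Tendsto y atTop (𝓝 xs)}

/-- the regular (Fréchet) subdifferential of an extended-real-valued function. -/
def regSubdiff (g : E → EReal) (x : E) : Set E :=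
  {v | ∀ ε : ℝ, 0 < ε → ∃ δ > 0, ∀ y, ‖y - x‖ ≤ δ →
    g x + ((⟪v, y - x⟫ - ε * ‖y - x‖ : ℝ) : EReal) ≤ g y}

/-- the limiting (Mordukhovich) subdifferential. -/
def limSubdiff (g : E → EReal) (x : E) : Set E :=
  {v | ∃ (xk vk : ℕ → E), Tendsto xk atTop (𝓝 x) ∧
    Tendsto (fun k => g (xk k)) atTop (𝓝 (g x)) ∧
    (∀ k, vk k ∈ regSubdiff g (xk k)) ∧ Tendsto vk atTop (𝓝 v)}

/-- the horizon (singular) subdifferential. -/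
def horizonSubdiff (g : E → EReal) (x : E) : Set E :=
  {v | ∃ (xk vk : ℕ → E) (lk : ℕ → ℝ), Tendsto xk atTop (𝓝 x) ∧
    Tendsto (fun k => g (xk k)) atTop (𝓝 (g x)) ∧ (∀ k, 0 < lk k) ∧
    Tendsto lk atTop (𝓝 0) ∧ (∀ k, vk k ∈ regSubdiff g (xk k)) ∧
    Tendsto (fun k => lk k • vk k) atTop (𝓝 v)}

/-- the outer limiting subdifferential of `g` at `xb` with respect to `vb`. -/
def outerSubdiffWrt (g : E → EReal) (xb vb : E) : Set E :=
  {v | ∃ (xk vk : ℕ → E), Tendsto xk atTop (𝓝 xb) ∧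
    Tendsto (fun k => g (xk k)) atTop (𝓝 (g xb)) ∧
    (∀ k, g xb + ((⟪vb, xk k - xb⟫ : ℝ) : EReal) < g (xk k)) ∧
    (∀ k, vk k ∈ limSubdiff g (xk k)) ∧ Tendsto vk atTop (𝓝 v)}

/-- `D` is a convex polyhedron (finite intersection of closed half-spaces). -/
def IsPolyhedral (D : Set E) : Prop :=
  ∃ s : Finset (E × ℝ), D = {v | ∀ p ∈ s, ⟪p.1, v⟫ ≤ p.2}

/-- the support function of `D`. -/
def supportFn (D : Set E) : E → EReal :=
  fun x => sSup ((fun v => ((⟪v, x⟫ : ℝ) : EReal)) '' D)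

end InnerDefs


-- Auxiliary polyhedral cone theory (Minkowski: polyhedral cones are finitely generated)
section
variable {E : Type*} [AddCommGroup E] [Module ℝ E]

def inCone (W : Finset E) (v : E) : Prop :=
  ∃ (m : ℕ) (c : Fin m → ℝ) (g : Fin m → E),
    (∀ i, 0 ≤ c i) ∧ (∀ i, c i ≠ 0 → g i ∈ W) ∧ v = ∑ i, c i • g i

lemma inCone_mem {W : Finset E} {w : E} (hw : w ∈ W) : inCone W w :=
  ⟨1, fun _ => 1, fun _ => w, fun _ => zero_le_one, fun _ _ => hw, by simp⟩

lemma inCone_zero (W : Finset E) : inCone W 0 :=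
  ⟨0, fun _ => 0, fun i => i.elim0, fun i => le_refl _, fun i => i.elim0, by simp⟩

lemma inCone_add {W : Finset E} {v u : E} (hv : inCone W v) (hu : inCone W u) :
    inCone W (v + u) := by
  obtain ⟨m₁, c₁, g₁, h₁, h₁', rfl⟩ := hv
  obtain ⟨m₂, c₂, g₂, h₂, h₂', rfl⟩ := hu
  refine ⟨m₁ + m₂, Fin.append c₁ c₂, Fin.append g₁ g₂, ?_, ?_, ?_⟩
  · refine Fin.addCases (fun j => ?_) (fun j => ?_)
    · rw [Fin.append_left]; exact h₁ j
    · rw [Fin.append_right]; exact h₂ j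
  · refine Fin.addCases (fun j hj => ?_) (fun j hj => ?_)
    · rw [Fin.append_left] at hj ⊢; exact h₁' j hj
    · rw [Fin.append_right] at hj ⊢; exact h₂' j hj
  · rw [Fin.sum_univ_add]
    congr 1
    · exact Finset.sum_congr rfl fun i _ => by simp only [Fin.append_left]
    · exact Finset.sum_congr rfl fun i _ => by simp only [Fin.append_right]

lemma inCone_smul {W : Finset E} {v : E} {t : ℝ} (ht : 0 ≤ t) (hv : inCone W v) :
    inCone W (t • v) := by
  obtain ⟨m, c, g, h, h', rfl⟩ := hv
  refine ⟨m, fun i => t * c i, g, fun i => mul_nonneg ht (h i), ?_, ?_⟩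
  · intro i hi
    exact h' i fun h0 => hi (by simp [h0])
  · rw [Finset.smul_sum]
    exact Finset.sum_congr rfl fun i _ => by rw [smul_smul]

lemma inCone_le {W : Finset E} {v : E} (f : E →ₗ[ℝ] ℝ) (hW : ∀ w ∈ W, f w ≤ 0)
    (hv : inCone W v) : f v ≤ 0 := by
  obtain ⟨m, c, g, h, h', rfl⟩ := hv
  rw [map_sum]
  refine Finset.sum_nonpos fun i _ => ?_
  rcases eq_or_ne (c i) 0 with h0 | h0
  · simp [h0]
  · rw [map_smul, smul_eq_mul]
    exact mul_nonpos_of_nonneg_of_nonpos (h i) (hW _ (h' i h0))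

lemma inCone_univ [FiniteDimensional ℝ E] :
    ∃ W : Finset E, ∀ v, inCone W v := by
  classical
  set d := Module.finrank ℝ E
  let b : Module.Basis (Fin d) ℝ E := Module.finBasis ℝ E
  refine ⟨(Finset.univ.image fun i => b i) ∪ (Finset.univ.image fun i => -(b i)), fun v => ?_⟩
  refine ⟨d + d, Fin.append (fun i => max (b.repr v i) 0) (fun i => max (-(b.repr v i)) 0),
    Fin.append (fun i => b i) (fun i => -(b i)), ?_, ?_, ?_⟩
  · refine Fin.addCases (fun j => ?_) (fun j => ?_)
    · rw [Fin.append_left]; exact le_max_right _ _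
    · rw [Fin.append_right]; exact le_max_right _ _
  · refine Fin.addCases (fun j hj => ?_) (fun j hj => ?_)
    · rw [Fin.append_left]
      exact Finset.mem_union_left _ (Finset.mem_image.2 ⟨j, Finset.mem_univ j, rfl⟩)
    · rw [Fin.append_right]
      exact Finset.mem_union_right _ (Finset.mem_image.2 ⟨j, Finset.mem_univ j, rfl⟩)
  · rw [Fin.sum_univ_add, ← Finset.sum_add_distrib]
    have : ∀ j : Fin d,
        Fin.append (fun i => max (b.repr v i) 0) (fun i => max (-(b.repr v i)) 0) (Fin.castAdd d j) •
          Fin.append (fun i => b i) (fun i => -(b i)) (Fin.castAdd d j) +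
        Fin.append (fun i => max (b.repr v i) 0) (fun i => max (-(b.repr v i)) 0) (Fin.natAdd d j) •
          Fin.append (fun i => b i) (fun i => -(b i)) (Fin.natAdd d j) = b.repr v j • b j := by
      intro j
      simp only [Fin.append_left, Fin.append_right, smul_neg]
      rw [← sub_eq_add_neg, ← sub_smul]
      congr 1
      rcases le_total (b.repr v j) 0 with h | h
      · rw [max_eq_right h, max_eq_left (by linarith)]; ring
      · rw [max_eq_left h, max_eq_right (by linarith)]; ring
    simp_rw [this]
    exact (b.sum_repr v).symm
end

open Classical in
noncomputable def coneMeasure {E : Type*} [AddCommGroup E] [Module ℝ E]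
    (f : E →ₗ[ℝ] ℝ) {m : ℕ} (c : Fin m → ℝ) (g : Fin m → E) : ℕ :=
  (Finset.univ.filter fun i => 0 < f (g i) ∧ 0 < c i).card * (m + 1) +
  (Finset.univ.filter fun i => f (g i) < 0 ∧ 0 < c i).card

section Exchange
variable {E : Type*} [AddCommGroup E] [Module ℝ E]

lemma inCone_terminal {f : E →ₗ[ℝ] ℝ} {W W' : Finset E}
    (hW0 : ∀ w ∈ W, f w ≤ 0 → w ∈ W') {m : ℕ} {c : Fin m → ℝ} {g : Fin m → E}
    (hc : ∀ i, 0 ≤ c i) (hg : ∀ i, c i ≠ 0 → g i ∈ W)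
    (hno : ¬ ∃ i, 0 < f (g i) ∧ 0 < c i) : inCone W' (∑ i, c i • g i) := by
  refine ⟨m, c, g, hc, fun i hi => ?_, rfl⟩
  refine hW0 _ (hg i hi) (le_of_not_gt fun hpos => hno ⟨i, hpos, (hc i).lt_of_ne (Ne.symm hi)⟩)

lemma meas_arith1 {NA NB NA' NB' m K : ℕ} (h1 : 1 ≤ NA) (hA : NA' ≤ NA - 1)
    (hB : NB' ≤ NB) (hBm : NB ≤ m) (hK : NA * (m+1) + NB ≤ K + 1) :
    NA' * (m+1) + NB' ≤ K := by
  obtain ⟨na, rfl⟩ : ∃ na, NA = na + 1 := ⟨NA - 1, by omega⟩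
  have h2 : NA' * (m+1) ≤ na * (m+1) := Nat.mul_le_mul_right _ (by omega)
  have h3 : (na+1) * (m+1) = na * (m+1) + (m+1) := by ring
  omega

lemma meas_arith2 {NA NB NA' NB' m K : ℕ} (h1 : 1 ≤ NB) (hA : NA' ≤ NA)
    (hB : NB' ≤ NB - 1) (hK : NA * (m+1) + NB ≤ K + 1) :
    NA' * (m+1) + NB' ≤ K := by
  have h2 : NA' * (m+1) ≤ NA * (m+1) := Nat.mul_le_mul_right _ hA
  omega

lemma inCone_exchange (f : E →ₗ[ℝ] ℝ) (W W' : Finset E)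
    (hW0 : ∀ w ∈ W, f w ≤ 0 → w ∈ W')
    (hpair : ∀ u ∈ W, ∀ w ∈ W, 0 < f u → f w < 0 → f u • w - f w • u ∈ W') :
    ∀ (K : ℕ) (m : ℕ) (c : Fin m → ℝ) (g : Fin m → E),
      (∀ i, 0 ≤ c i) → (∀ i, c i ≠ 0 → g i ∈ W) →
      f (∑ i, c i • g i) ≤ 0 → coneMeasure f c g ≤ K →
      inCone W' (∑ i, c i • g i) := by
  classical
  intro K
  induction K with
  | zero =>
    intro m c g hc hg hf hK
    refine inCone_terminal hW0 hc hg fun ⟨i, hi1, hi2⟩ => ?_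
    have h1 : i ∈ Finset.univ.filter fun i => 0 < f (g i) ∧ 0 < c i := by
      simp [hi1, hi2]
    have := Finset.card_pos.2 ⟨i, h1⟩
    simp only [coneMeasure, Nat.le_zero, Nat.add_eq_zero, Nat.mul_eq_zero] at hK
    omega
  | succ K ih =>
    intro m c g hc hg hf hK
    by_cases hex : ∃ i, 0 < f (g i) ∧ 0 < c i
    · obtain ⟨i, hfi, hci⟩ := hex
      -- find a negative index j
      have hsum : ∑ k, c k * f (g k) ≤ 0 := by
        have : f (∑ k, c k • g k) = ∑ k, c k * f (g k) := by
          rw [map_sum]; exact Finset.sum_congr rfl fun k _ => by rw [map_smul, smul_eq_mul]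
        linarith [this ▸ hf]
      have hexj : ∃ j, f (g j) < 0 ∧ 0 < c j := by
        by_contra hno
        push_neg at hno
        have hnn : ∀ k ∈ Finset.univ.erase i, 0 ≤ c k * f (g k) := by
          intro k _
          rcases (hc k).lt_or_eq with h | h
          · have hnn0 : 0 ≤ f (g k) := le_of_not_gt fun hneg => absurd (hno k hneg) (not_le.2 h)
            exact mul_nonneg (hc k) hnn0
          · simp [← h]
        have : 0 < ∑ k, c k * f (g k) := by
          rw [← Finset.add_sum_erase _ _ (Finset.mem_univ i)]
          have : 0 ≤ ∑ k ∈ Finset.univ.erase i, c k * f (g k) := Finset.sum_nonneg hnn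
          nlinarith [mul_pos hci hfi]
        linarith
      obtain ⟨j, hfj, hcj⟩ := hexj
      have hij : i ≠ j := fun h => by rw [h] at hfi; linarith
      have hdpos : (0:ℝ) < -f (g j) := by linarith
      set γ : ℝ := min (c i / (-f (g j))) (c j / f (g i)) with hγdef
      have hγ1 : γ * (-f (g j)) ≤ c i := (le_div_iff₀ hdpos).1 (min_le_left _ _)
      have hγ2 : γ * f (g i) ≤ c j := (le_div_iff₀ hfi).1 (min_le_right _ _)
      have hγpos : 0 < γ := lt_min (div_pos hci hdpos) (div_pos hcj hfi)
      set a : ℝ := c i + γ * f (g j) with ha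
      set bb : ℝ := c j - γ * f (g i) with hb
      have hann : 0 ≤ a := by simp only [ha]; nlinarith
      have hbnn : 0 ≤ bb := by simp only [hb]; linarith
      set c' : Fin m → ℝ := fun k => if k = i then a else if k = j then bb else c k with hc'
      have hc'i : c' i = a := by simp [hc']
      have hc'j : c' j = bb := by simp [hc', hij.symm]
      have hc'le : ∀ k, c' k ≤ c k := by
        intro k
        by_cases h1 : k = i
        · subst h1; rw [hc'i, ha]; nlinarith
        by_cases h2 : k = j
        · subst h2; rw [hc'j, hb]; nlinarith
        · simp [hc', h1, h2]
      have hc'nonneg : ∀ k, 0 ≤ c' k := by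
        intro k
        by_cases h1 : k = i
        · subst h1; rw [hc'i]; exact hann
        by_cases h2 : k = j
        · subst h2; rw [hc'j]; exact hbnn
        · simp [hc', h1, h2, hc k]
      have hc'g : ∀ k, c' k ≠ 0 → g k ∈ W := by
        intro k hk
        refine hg k fun h0 => hk ?_
        exact le_antisymm (h0 ▸ hc'le k) (hc'nonneg k)
      have hgen : f (g i) • g j - f (g j) • g i ∈ W' :=
        hpair _ (hg i (ne_of_gt hci)) _ (hg j (ne_of_gt hcj)) hfi hfj
      -- algebra: decomposition
      have hdiff : ∀ k, c k • g k - c' k • g k =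
          (if k = i then ((γ * (-f (g j))) • g i) else 0) +
          (if k = j then ((γ * f (g i)) • g j) else 0) := by
        intro k
        by_cases h1 : k = i
        · subst h1
          rw [hc'i, if_pos rfl, if_neg hij, ← sub_smul, ha, add_zero]
          congr 1; ring
        by_cases h2 : k = j
        · subst h2
          rw [hc'j, if_neg h1, if_pos rfl, ← sub_smul, hb, zero_add]
          congr 1; ring
        · simp [hc', h1, h2]
      have hsumdiff : ∑ k, c k • g k - ∑ k, c' k • g k =
          (γ * (-f (g j))) • g i + (γ * f (g i)) • g j := by
        rw [← Finset.sum_sub_distrib]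
        simp_rw [hdiff]
        rw [Finset.sum_add_distrib, Finset.sum_ite_eq' Finset.univ i,
          Finset.sum_ite_eq' Finset.univ j]
        simp
      have hdecomp : ∑ k, c k • g k =
          (∑ k, c' k • g k) + γ • (f (g i) • g j - f (g j) • g i) := by
        have : γ • (f (g i) • g j - f (g j) • g i) =
            (γ * (-f (g j))) • g i + (γ * f (g i)) • g j := by
          rw [smul_sub, smul_smul, smul_smul]
          rw [show γ * (-f (g j)) = -(γ * f (g j)) by ring, neg_smul]
          abel
        rw [this, ← hsumdiff]; abel
      have hf' : f (∑ k, c' k • g k) ≤ 0 := by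
        have := congrArg f hdecomp
        rw [map_add, map_smul, map_sub, map_smul, map_smul] at this
        simp only [smul_eq_mul] at this
        nlinarith [this]
      -- measure decrease
      have hAsub : (Finset.univ.filter fun k => 0 < f (g k) ∧ 0 < c' k) ⊆
          (Finset.univ.filter fun k => 0 < f (g k) ∧ 0 < c k) := by
        intro k hk
        simp only [Finset.mem_filter] at hk ⊢
        exact ⟨hk.1, hk.2.1, lt_of_lt_of_le hk.2.2 (hc'le k)⟩
      have hBsub : (Finset.univ.filter fun k => f (g k) < 0 ∧ 0 < c' k) ⊆
          (Finset.univ.filter fun k => f (g k) < 0 ∧ 0 < c k) := by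
        intro k hk
        simp only [Finset.mem_filter] at hk ⊢
        exact ⟨hk.1, hk.2.1, lt_of_lt_of_le hk.2.2 (hc'le k)⟩
      have hmeas : coneMeasure f c' g ≤ K := by
        rcases le_total (c i / (-f (g j))) (c j / f (g i)) with hmin | hmin
        · -- γ = c i / (-f (g j)), so c' i = 0
          have hγeq : γ = c i / (-f (g j)) := min_eq_left hmin
          have hazero : a = 0 := by
            rw [ha, hγeq]
            field_simp
            rw [div_self hfj.ne]; ring
          have hiA : i ∈ (Finset.univ.filter fun k => 0 < f (g k) ∧ 0 < c k) :=
            Finset.mem_filter.2 ⟨Finset.mem_univ i, hfi, hci⟩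
          have hAsub' : (Finset.univ.filter fun k => 0 < f (g k) ∧ 0 < c' k) ⊆
              (Finset.univ.filter fun k => 0 < f (g k) ∧ 0 < c k).erase i := by
            intro k hk
            refine Finset.mem_erase.2 ⟨fun h => ?_, hAsub hk⟩
            subst h
            simp only [Finset.mem_filter, hc'i, hazero] at hk
            exact lt_irrefl 0 hk.2.2
          have hcard1 : (Finset.univ.filter fun k => 0 < f (g k) ∧ 0 < c' k).card ≤
              (Finset.univ.filter fun k => 0 < f (g k) ∧ 0 < c k).card - 1 := by
            have := Finset.card_le_card hAsub'
            rwa [Finset.card_erase_of_mem hiA] at this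
          have hcardB : (Finset.univ.filter fun k => f (g k) < 0 ∧ 0 < c' k).card ≤
              (Finset.univ.filter fun k => f (g k) < 0 ∧ 0 < c k).card :=
            Finset.card_le_card hBsub
          have hBle : (Finset.univ.filter fun k => f (g k) < 0 ∧ 0 < c k).card ≤ m := by
            simpa using Finset.card_le_card
              ((Finset.univ.filter fun k => f (g k) < 0 ∧ 0 < c k).subset_univ)
          have h1le : 1 ≤ (Finset.univ.filter fun k => 0 < f (g k) ∧ 0 < c k).card :=
            Finset.card_pos.2 ⟨i, hiA⟩
          simp only [coneMeasure, Finset.filter_congr_decidable] at hK ⊢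
          exact meas_arith1 h1le hcard1 hcardB hBle hK
        · -- γ = c j / f (g i), c' j = 0
          have hγeq : γ = c j / f (g i) := min_eq_right hmin
          have hbzero : bb = 0 := by
            rw [hb, hγeq]
            field_simp
            ring
          have hjB : j ∈ (Finset.univ.filter fun k => f (g k) < 0 ∧ 0 < c k) :=
            Finset.mem_filter.2 ⟨Finset.mem_univ j, hfj, hcj⟩
          have hBsub' : (Finset.univ.filter fun k => f (g k) < 0 ∧ 0 < c' k) ⊆
              (Finset.univ.filter fun k => f (g k) < 0 ∧ 0 < c k).erase j := by
            intro k hk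
            refine Finset.mem_erase.2 ⟨fun h => ?_, hBsub hk⟩
            subst h
            simp only [Finset.mem_filter, hc'j, hbzero] at hk
            exact lt_irrefl 0 hk.2.2
          have hcard1 : (Finset.univ.filter fun k => f (g k) < 0 ∧ 0 < c' k).card ≤
              (Finset.univ.filter fun k => f (g k) < 0 ∧ 0 < c k).card - 1 := by
            have := Finset.card_le_card hBsub'
            rwa [Finset.card_erase_of_mem hjB] at this
          have hcardA : (Finset.univ.filter fun k => 0 < f (g k) ∧ 0 < c' k).card ≤
              (Finset.univ.filter fun k => 0 < f (g k) ∧ 0 < c k).card :=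
            Finset.card_le_card hAsub
          have h1le : 1 ≤ (Finset.univ.filter fun k => f (g k) < 0 ∧ 0 < c k).card :=
            Finset.card_pos.2 ⟨j, hjB⟩
          simp only [coneMeasure, Finset.filter_congr_decidable] at hK ⊢
          exact meas_arith2 h1le hcardA hcard1 hK
      rw [hdecomp]
      exact inCone_add (ih m c' g hc'nonneg hc'g hf' hmeas)
        (inCone_smul hγpos.le (inCone_mem hgen))
    · exact inCone_terminal hW0 hc hg hex
end Exchange

section ConeFG
variable {E : Type*} [AddCommGroup E] [Module ℝ E]

theorem cone_fg [FiniteDimensional ℝ E] (l : List (E →ₗ[ℝ] ℝ)) :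
    ∃ W : Finset E, ∀ v, inCone W v ↔ ∀ f ∈ l, f v ≤ 0 := by
  classical
  induction l with
  | nil =>
    obtain ⟨W, hW⟩ := inCone_univ (E := E)
    exact ⟨W, fun v => ⟨fun _ => by simp, fun _ => hW v⟩⟩
  | cons f l ih =>
    obtain ⟨W, hW⟩ := ih
    set W' : Finset E := (W.filter fun w => f w ≤ 0) ∪
      (((W ×ˢ W).filter fun q => 0 < f q.1 ∧ f q.2 < 0).image
        fun q => f q.1 • q.2 - f q.2 • q.1) with hW'def
    refine ⟨W', fun v => ⟨fun hv f' hf' => ?_, fun hv => ?_⟩⟩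
    · -- forward: every element of W' satisfies all constraints
      refine inCone_le f' (fun w hw => ?_) hv
      rw [hW'def, Finset.mem_union] at hw
      rcases hw with hw | hw
      · rw [Finset.mem_filter] at hw
        have hwl : ∀ f'' ∈ l, f'' w ≤ 0 := (hW w).1 (inCone_mem hw.1)
        rcases List.mem_cons.1 hf' with rfl | hf'
        · exact hw.2
        · exact hwl f' hf'
      · rw [Finset.mem_image] at hw
        obtain ⟨q, hq, rfl⟩ := hw
        rw [Finset.mem_filter, Finset.mem_product] at hq
        obtain ⟨⟨hq1, hq2⟩, hfq1, hfq2⟩ := hq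
        have h1 : ∀ f'' ∈ l, f'' q.1 ≤ 0 := (hW q.1).1 (inCone_mem hq1)
        have h2 : ∀ f'' ∈ l, f'' q.2 ≤ 0 := (hW q.2).1 (inCone_mem hq2)
        rw [map_sub, map_smul, map_smul, smul_eq_mul, smul_eq_mul]
        rcases List.mem_cons.1 hf' with rfl | hf'
        · nlinarith
        · nlinarith [h1 f' hf', h2 f' hf']
    · -- backward
      have hvW : inCone W v := (hW v).2 fun f'' hf'' => hv f'' (List.mem_cons_of_mem f hf'')
      obtain ⟨m, c, g, hc, hg, rfl⟩ := hvW
      refine inCone_exchange f W W' ?_ ?_ (coneMeasure f c g) m c g hc hg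
        (hv f List.mem_cons_self) le_rfl
      · intro w hw hfw
        exact Finset.mem_union_left _ (Finset.mem_filter.2 ⟨hw, hfw⟩)
      · intro u hu w hw hfu hfw
        refine Finset.mem_union_right _ (Finset.mem_image.2 ⟨(u, w), ?_, rfl⟩)
        exact Finset.mem_filter.2 ⟨Finset.mem_product.2 ⟨hu, hw⟩, hfu, hfw⟩
end ConeFG

noncomputable def pf {n : ℕ} (a : Eu n) (β : ℝ) : (Eu n × ℝ) →ₗ[ℝ] ℝ where
  toFun q := ⟪a, q.1⟫ - β * q.2
  map_add' p q := by simp [inner_add_right]; ring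
  map_smul' t q := by simp [inner_smul_right]; ring

@[simp] lemma pf_apply {n : ℕ} (a : Eu n) (β : ℝ) (q : Eu n × ℝ) :
    pf a β q = ⟪a, q.1⟫ - β * q.2 := rfl


/-- Corollary 3.1 (d): if `D` is a nonempty convex polyhedron, then for
every `x ∈ (D^∞)*` with `F_{D,x} ≠ ∅`, the excess of `F_{D,x}` over `F_{D^∞,x}` is
finite. -/
theorem excess_finite_of_polyhedral {n : ℕ} (D : Set (Eu n)) (hne : D.Nonempty)
    (hpoly : IsPolyhedral D) (x : Eu n) (hx : ∀ w ∈ horizonCone D, ⟪w, x⟫ ≤ 0)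
    (hface : {v | v ∈ D ∧ ∀ v' ∈ D, ⟪v', x⟫ ≤ ⟪v, x⟫}.Nonempty) :
    ∃ C : ℝ, ∀ v ∈ {v | v ∈ D ∧ ∀ v' ∈ D, ⟪v', x⟫ ≤ ⟪v, x⟫},
      Metric.infDist v
        {w | w ∈ horizonCone D ∧ ∀ w' ∈ horizonCone D, ⟪w', x⟫ ≤ ⟪w, x⟫} ≤ C := by
  classical
  obtain ⟨s, hs⟩ := hpoly
  obtain ⟨v₀, hv₀D, hv₀max⟩ := hface
  obtain ⟨a₀, ha₀⟩ := hne
  set mx : ℝ := ⟪v₀, x⟫ with hmx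
  set l : List ((Eu n × ℝ) →ₗ[ℝ] ℝ) :=
    (s.toList.map fun p => pf p.1 p.2) ++
      [pf x mx, pf (-x) (-mx), -(LinearMap.snd ℝ (Eu n) ℝ)] with hl
  obtain ⟨W, hW⟩ := cone_fg l
  set T : Set (Eu n) :=
    {w | w ∈ horizonCone D ∧ ∀ w' ∈ horizonCone D, ⟪w', x⟫ ≤ ⟪w, x⟫} with hT
  have hmemD : ∀ v, v ∈ D ↔ ∀ p ∈ s, ⟪p.1, v⟫ ≤ p.2 := fun v => by rw [hs]; rfl
  refine ⟨∑ w ∈ W, (if 0 < w.2 then ‖w.1‖ / w.2 else 0), fun v hv => ?_⟩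
  set C : ℝ := ∑ w ∈ W, (if 0 < w.2 then ‖w.1‖ / w.2 else 0) with hC
  have hCnn : ∀ w ∈ W, 0 ≤ (if 0 < w.2 then ‖w.1‖ / w.2 else 0) := by
    intro w _
    split
    · exact div_nonneg (norm_nonneg _) (by linarith [‹0 < w.2›])
    · exact le_refl 0
  obtain ⟨hvD, hvmax⟩ := hv
  -- (v, 1) satisfies all constraints
  have hvC : ∀ f ∈ l, f (v, 1) ≤ 0 := by
    intro f hf
    rw [hl] at hf
    simp only [List.mem_append, List.mem_map, Finset.mem_toList, List.mem_cons,
      List.not_mem_nil, or_false] at hf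
    rcases hf with ⟨p, hp, rfl⟩ | rfl | rfl | rfl
    · simpa using ((hmemD v).1 hvD p hp)
    · have := hv₀max v hvD
      simp only [pf_apply, mul_one]
      rw [real_inner_comm]
      linarith
    · have := hvmax v₀ hv₀D
      simp only [pf_apply, mul_one, inner_neg_left]
      rw [real_inner_comm]
      linarith
    · simp
  obtain ⟨m, c, g, hc, hg, hrep⟩ := (hW (v, 1)).2 hvC
  -- generator facts
  have hgC : ∀ i, c i ≠ 0 → ∀ f ∈ l, f (g i) ≤ 0 :=
    fun i hi => (hW (g i)).1 (inCone_mem (hg i hi))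
  have hτnn : ∀ i, c i ≠ 0 → 0 ≤ (g i).2 := by
    intro i hi
    have := hgC i hi (-(LinearMap.snd ℝ (Eu n) ℝ)) (by rw [hl]; simp)
    simpa using this
  have hgp : ∀ i, c i ≠ 0 → ∀ p ∈ s, ⟪p.1, (g i).1⟫ ≤ p.2 * (g i).2 := by
    intro i hi p hp
    have := hgC i hi (pf p.1 p.2)
      (by rw [hl]; exact List.mem_append_left _ (List.mem_map.2 ⟨p, Finset.mem_toList.2 hp, rfl⟩))
    simp only [pf_apply] at this
    linarith
  have hgx : ∀ i, c i ≠ 0 → ⟪x, (g i).1⟫ = mx * (g i).2 := by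
    intro i hi
    have h1 := hgC i hi (pf x mx) (by rw [hl]; simp)
    have h2 := hgC i hi (pf (-x) (-mx)) (by rw [hl]; simp)
    simp only [pf_apply, inner_neg_left] at h1 h2
    linarith
  -- decomposition
  have hfst : v = ∑ i, c i • (g i).1 := by
    have h := congrArg Prod.fst hrep
    simp only [Prod.fst_sum, Prod.smul_fst] at h
    exact h
  have hsnd : (1 : ℝ) = ∑ i, c i * (g i).2 := by
    have h := congrArg Prod.snd hrep
    simp only [Prod.snd_sum, Prod.smul_snd, smul_eq_mul] at h
    exact h
  set qq : Eu n := ∑ i, (if 0 < (g i).2 then (0 : Eu n) else c i • (g i).1) with hqq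
  set rr : Eu n := ∑ i, (if 0 < (g i).2 then c i • (g i).1 else (0 : Eu n)) with hrr
  have hvqr : v = qq + rr := by
    rw [hfst, hqq, hrr, ← Finset.sum_add_distrib]
    refine Finset.sum_congr rfl fun i _ => ?_
    by_cases h : 0 < (g i).2 <;> simp [h]
  -- inner products with qq
  have hqinner : ∀ a : Eu n, ⟪a, qq⟫ =
      ∑ i, (if 0 < (g i).2 then 0 else c i * ⟪a, (g i).1⟫) := by
    intro a
    rw [hqq, inner_sum]
    refine Finset.sum_congr rfl fun i _ => ?_
    by_cases h : 0 < (g i).2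
    · simp [h]
    · rw [if_neg h, if_neg h, real_inner_smul_right]
  have hτ0 : ∀ i, c i ≠ 0 → ¬ 0 < (g i).2 → (g i).2 = 0 :=
    fun i hi h => le_antisymm (le_of_not_gt h) (hτnn i hi)
  have hqle : ∀ p ∈ s, ⟪p.1, qq⟫ ≤ 0 := by
    intro p hp
    rw [hqinner]
    refine Finset.sum_nonpos fun i _ => ?_
    split
    · exact le_refl 0
    · rcases eq_or_ne (c i) 0 with h0 | h0
      · simp [h0]
      · have hτ := hτ0 i h0 (by assumption)
        have := hgp i h0 p hp
        rw [hτ, mul_zero] at this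
        exact mul_nonpos_of_nonneg_of_nonpos (hc i) this
  have hqx : ⟪x, qq⟫ = 0 := by
    rw [hqinner]
    refine Finset.sum_eq_zero fun i _ => ?_
    split
    · rfl
    · rcases eq_or_ne (c i) 0 with h0 | h0
      · simp [h0]
      · have hτ := hτ0 i h0 (by assumption)
        have := hgx i h0
        rw [hτ, mul_zero] at this
        rw [this, mul_zero]
  -- qq ∈ horizonCone D
  have hqH : qq ∈ horizonCone D := by
    refine ⟨fun k => a₀ + ((k : ℝ) + 1) • qq, fun k => ((k : ℝ) + 1)⁻¹, ?_, ?_, ?_, ?_⟩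
    · intro k
      rw [hmemD]
      intro p hp
      have h1 := (hmemD a₀).1 ha₀ p hp
      have h2 := hqle p hp
      have hk : (0 : ℝ) ≤ (k : ℝ) + 1 := by positivity
      rw [inner_add_right, real_inner_smul_right]
      nlinarith
    · intro k
      positivity
    · have h := tendsto_one_div_add_atTop_nhds_zero_nat (𝕜 := ℝ)
      simpa [one_div] using h
    · have hfun : ∀ k : ℕ, ((k : ℝ) + 1)⁻¹ • (a₀ + ((k : ℝ) + 1) • qq) =
          ((k : ℝ) + 1)⁻¹ • a₀ + qq := by
        intro k
        rw [smul_add, smul_smul, inv_mul_cancel₀ (by positivity), one_smul]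
      simp only [hfun]
      have h1 : Tendsto (fun k : ℕ => ((k : ℝ) + 1)⁻¹ • a₀) atTop (𝓝 ((0 : ℝ) • a₀)) := by
        refine Tendsto.smul_const ?_ a₀
        have h := tendsto_one_div_add_atTop_nhds_zero_nat (𝕜 := ℝ)
        simpa [one_div] using h
      rw [zero_smul] at h1
      have := h1.add_const qq
      simpa using this
  have hqT : qq ∈ T := by
    have h0 : ⟪qq, x⟫ = (0 : ℝ) := by rw [real_inner_comm]; exact hqx
    exact ⟨hqH, fun w' hw' => by rw [h0]; exact hx w' hw'⟩
  -- the norm bound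
  have hrbound : ‖rr‖ ≤ C := by
    have h1 : ‖rr‖ ≤ ∑ i, ‖(if 0 < (g i).2 then c i • (g i).1 else (0 : Eu n))‖ :=
      norm_sum_le _ _
    have h2 : ∀ i, ‖(if 0 < (g i).2 then c i • (g i).1 else (0 : Eu n))‖ ≤
        (c i * (g i).2) * C := by
      intro i
      rcases eq_or_ne (c i) 0 with h0 | h0
      · simp [h0]
      by_cases hτ : 0 < (g i).2
      · rw [if_pos hτ, norm_smul, Real.norm_eq_abs, abs_of_nonneg (hc i)]
        have hratio : ‖(g i).1‖ / (g i).2 ≤ C := by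
          have := Finset.single_le_sum hCnn (hg i h0)
          rwa [if_pos hτ] at this
        have : ‖(g i).1‖ = (g i).2 * (‖(g i).1‖ / (g i).2) := by
          field_simp
        rw [this, ← mul_assoc]
        have hcτ : 0 ≤ c i * (g i).2 := mul_nonneg (hc i) hτ.le
        exact mul_le_mul_of_nonneg_left hratio hcτ
      · rw [if_neg hτ, norm_zero, hτ0 i h0 hτ, mul_zero, zero_mul]
    calc ‖rr‖ ≤ ∑ i, ‖(if 0 < (g i).2 then c i • (g i).1 else (0 : Eu n))‖ := h1
      _ ≤ ∑ i, (c i * (g i).2) * C := Finset.sum_le_sum fun i _ => h2 i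
      _ = (∑ i, c i * (g i).2) * C := by rw [Finset.sum_mul]
      _ = C := by rw [← hsnd, one_mul]
  calc Metric.infDist v T ≤ dist v qq := Metric.infDist_le_dist_of_mem hqT
    _ = ‖v - qq‖ := by rw [dist_eq_norm]
    _ = ‖rr‖ := by rw [hvqr]; congr 1; abel
    _ ≤ C := hrbound
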